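/- Let Λ := U(2)³ ⊕ E8(−1) ⊕ (−2) ⊕ (−2). Suppose D ∈ Λ satisfies q(D) = −12 and div(D) = 2, and let φ ∈ O(Λ) be any isometry. Then the projection D_{U(2)³} of D to the U(2)³-summand is divisible by 2 (i.e. lies in 2·U(2)³) if and only if the projection φ(D)_{U(2)³} of φ(D) is divisible by 2. -/

import Mathlib

open Matrix

section Prelude

variable {ι : Type*} [Fintype ι] [DecidableEq ι]

/-- The bilinear form associated to a Gram matrix `G`. -/
def bf (G : Matrix ι ι ℤ) (x y : ι → ℤ) : ℤ := x ⬝ᵥ G.mulVec y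

/-- `φ` is an isometry of the lattice `(ι → ℤ, bf G)`. -/
def IsIsometry (G : Matrix ι ι ℤ) (φ : (ι → ℤ) ≃ₗ[ℤ] (ι → ℤ)) : Prop :=
  ∀ x y, bf G (φ x) (φ y) = bf G x y

/-- `x` is a primitive lattice vector. -/
def IsPrimitive (x : ι → ℤ) : Prop :=
  x ≠ 0 ∧ ∀ (k : ℤ) (y : ι → ℤ), x = k • y → IsUnit k

/-- `d` is the divisibility of `x`: the positive generator of the ideal `(x, L) ⊆ ℤ`. -/
def HasDiv (G : Matrix ι ι ℤ) (x : ι → ℤ) (d : ℤ) : Prop :=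
  0 < d ∧ (∀ y, d ∣ bf G x y) ∧ ∀ s : ℤ, (∀ y, s ∣ bf G x y) → s ∣ d

/-- The Gram matrix of the hyperbolic plane `U`. -/
def gramU : Matrix (Fin 2) (Fin 2) ℤ := !![0, 1; 1, 0]

/-- The Gram matrix of `E₈(-1)`: the negative of the `E₈` Cartan matrix. -/
def gramE8 : Matrix (Fin 8) (Fin 8) ℤ := - CartanMatrix.E₈

/-- The Gram matrix of `U³`. -/
def gramU3 : Matrix (Fin 2 × Fin 3) (Fin 2 × Fin 3) ℤ :=
  Matrix.blockDiagonal fun _ => gramU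

/-- The Gram matrix of `U(2)³`. -/
def gramU2_3 : Matrix (Fin 2 × Fin 3) (Fin 2 × Fin 3) ℤ :=
  Matrix.blockDiagonal fun _ => (2 : ℤ) • gramU

/-- The subgroup of isometries of the lattice with Gram matrix `G`. -/
def isomGroup (G : Matrix ι ι ℤ) : Subgroup ((ι → ℤ) ≃ₗ[ℤ] (ι → ℤ)) where
  carrier := {φ | IsIsometry G φ}
  one_mem' := fun _ _ => rfl
  mul_mem' := by
    intro a b ha hb x y
    show bf G (a (b x)) (a (b y)) = bf G x y
    rw [ha, hb]
  inv_mem' := by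
    intro a ha x y
    have h := ha (a.symm x) (a.symm y)
    simp only [LinearEquiv.apply_symm_apply] at h
    exact h.symm

/-- Two nonzero lattice vectors span the same ray iff positive multiples agree. -/
def raySetoid (ι : Type*) : Setoid {x : ι → ℤ // x ≠ 0} where
  r x y := ∃ a b : ℤ, 0 < a ∧ 0 < b ∧ a • x.1 = b • y.1
  iseqv := by
    constructor
    · exact fun x => ⟨1, 1, one_pos, one_pos, rfl⟩
    · rintro x y ⟨a, b, ha, hb, h⟩
      exact ⟨b, a, hb, ha, h.symm⟩
    · rintro x y z ⟨a, b, ha, hb, h⟩ ⟨c, d, hc, hd, h'⟩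
      refine ⟨c * a, b * d, mul_pos hc ha, mul_pos hb hd, ?_⟩
      calc (c * a) • x.1 = c • a • x.1 := (smul_smul c a x.1).symm
        _ = c • b • y.1 := by rw [h]
        _ = b • c • y.1 := smul_comm c b y.1
        _ = b • d • z.1 := by rw [h']
        _ = (b * d) • z.1 := smul_smul b d z.1

/-- The set of rays (half-lines spanned by nonzero lattice vectors). -/
def Ray (ι : Type*) := Quotient (raySetoid ι)

/-- The ray spanned by a nonzero lattice vector. -/
def rayMk (x : ι → ℤ) (hx : x ≠ 0) : Ray ι := Quotient.mk (raySetoid ι) ⟨x, hx⟩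

/-- The action of a linear automorphism on rays. -/
def rayMap (φ : (ι → ℤ) ≃ₗ[ℤ] (ι → ℤ)) : Ray ι → Ray ι :=
  Quotient.map (fun p => ⟨φ p.1, fun h => p.2 (by simpa using φ.map_eq_zero_iff.mp h)⟩)
    (by
      rintro x y ⟨a, b, ha, hb, h⟩
      refine ⟨a, b, ha, hb, ?_⟩
      show a • φ x.1 = b • φ y.1
      rw [← _root_.map_smul, ← _root_.map_smul, h])

end Prelude

/-- The index type of `Λ = U(2)³ ⊕ E₈(-1) ⊕ (-2) ⊕ (-2)`. -/
abbrev K16 := (Fin 2 × Fin 3) ⊕ (Fin 8 ⊕ (Fin 1 ⊕ Fin 1))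

/-- The Gram matrix of the Beauville–Bogomolov lattice `Λ = U(2)³ ⊕ E₈(-1) ⊕ (-2) ⊕ (-2)` of
Nikulin orbifolds. -/
def gramLambda : Matrix K16 K16 ℤ :=
  Matrix.fromBlocks gramU2_3 0 0
    (Matrix.fromBlocks gramE8 0 0 (Matrix.fromBlocks !![-2] 0 0 !![-2]))

abbrev iU (i : Fin 2) (k : Fin 3) : K16 := Sum.inl (i, k)
abbrev iE (j : Fin 8) : K16 := Sum.inr (Sum.inl j)
abbrev iA : K16 := Sum.inr (Sum.inr (Sum.inl 0))
abbrev iB : K16 := Sum.inr (Sum.inr (Sum.inr 0))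

def eF (i j : Fin 8) : ℤ :=
  if i = j then -2
  else if (min i.val j.val, max i.val j.val) ∈ [(0,2),(1,3),(2,3),(3,4),(4,5),(5,6),(6,7)] then 1 else 0

lemma hE : ∀ i j : Fin 8, gramE8 i j = eF i j := by
  intro i j; fin_cases i <;> fin_cases j <;> decide

def Upart (x y : K16 → ℤ) : ℤ :=
  2 * (x (iU 0 0) * y (iU 1 0) + x (iU 1 0) * y (iU 0 0)
     + x (iU 0 1) * y (iU 1 1) + x (iU 1 1) * y (iU 0 1)
     + x (iU 0 2) * y (iU 1 2) + x (iU 1 2) * y (iU 0 2))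

def e8q (v w : Fin 8 → ℤ) : ℤ :=
  -2 * (v 0 * w 0 + v 1 * w 1 + v 2 * w 2 + v 3 * w 3 + v 4 * w 4 + v 5 * w 5 + v 6 * w 6 + v 7 * w 7)
  + (v 0 * w 2 + v 2 * w 0) + (v 1 * w 3 + v 3 * w 1) + (v 2 * w 3 + v 3 * w 2)
  + (v 3 * w 4 + v 4 * w 3) + (v 4 * w 5 + v 5 * w 4) + (v 5 * w 6 + v 6 * w 5)
  + (v 6 * w 7 + v 7 * w 6)

def Epart (x y : K16 → ℤ) : ℤ := e8q (fun j => x (iE j)) (fun j => y (iE j))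

def Tpart (x y : K16 → ℤ) : ℤ := -2 * (x iA * y iA + x iB * y iB)

set_option maxHeartbeats 2000000 in
lemma bf_expand (x y : K16 → ℤ) : bf gramLambda x y = Upart x y + Epart x y + Tpart x y := by
  simp (config := { decide := true }) [bf, gramLambda, Upart, Epart, Tpart, e8q, iU, iE, iA, iB,
    gramU2_3, gramU, hE, eF,
    Matrix.mulVec, dotProduct, Fintype.sum_sum_type, Fintype.sum_prod_type,
    Fin.sum_univ_two, Fin.sum_univ_three, Fin.sum_univ_eight,
    Matrix.fromBlocks, Matrix.blockDiagonal]
  ring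

/-- standard basis vector -/
def std (c : K16) : K16 → ℤ := fun j => if j = c then 1 else 0

lemma e8q_half (v w g h : Fin 8 → ℤ) (hv : ∀ j, v j = 2 * g j) (hw : ∀ j, w j = 2 * h j) :
    e8q v w = 4 * e8q g h := by
  simp only [e8q]
  rw [hv 0, hv 1, hv 2, hv 3, hv 4, hv 5, hv 6, hv 7,
      hw 0, hw 1, hw 2, hw 3, hw 4, hw 5, hw 6, hw 7]
  ring

lemma e8q_self (v : Fin 8 → ℤ) :
    e8q v v = 2 * (-(v 0*v 0) - v 1*v 1 - v 2*v 2 - v 3*v 3 - v 4*v 4 - v 5*v 5 - v 6*v 6 - v 7*v 7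
      + v 0*v 2 + v 1*v 3 + v 2*v 3 + v 3*v 4 + v 4*v 5 + v 5*v 6 + v 6*v 7) := by
  simp only [e8q]; ring

lemma mul42 {x y z : ℤ} (h1 : x = 4 * y) (h2 : y = 2 * z) : x = 8 * z := by rw [h1, h2]; ring

lemma Upart_half_left (x y : K16 → ℤ) (g : Fin 2 × Fin 3 → ℤ)
    (hx : ∀ u, x (Sum.inl u) = 2 * g u) :
    Upart x y = 4 * (g (0,0) * y (Sum.inl (1,0)) + g (1,0) * y (Sum.inl (0,0))
      + g (0,1) * y (Sum.inl (1,1)) + g (1,1) * y (Sum.inl (0,1))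
      + g (0,2) * y (Sum.inl (1,2)) + g (1,2) * y (Sum.inl (0,2))) := by
  simp only [Upart, iU]
  rw [hx (0,0), hx (1,0), hx (0,1), hx (1,1), hx (0,2), hx (1,2)]
  ring

lemma Upart_half2 (x : K16 → ℤ) (g : Fin 2 × Fin 3 → ℤ)
    (hx : ∀ u, x (Sum.inl u) = 2 * g u) :
    Upart x x = 8 * (g (0,0)*g (1,0) + g (1,0)*g (0,0) + g (0,1)*g (1,1) + g (1,1)*g (0,1)
      + g (0,2)*g (1,2) + g (1,2)*g (0,2)) := by
  simp only [Upart, iU]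
  rw [hx (0,0), hx (1,0), hx (0,1), hx (1,1), hx (0,2), hx (1,2)]
  ring

lemma Upart_self (y : K16 → ℤ) :
    Upart y y = 4 * (y (iU 0 0) * y (iU 1 0) + y (iU 0 1) * y (iU 1 1) + y (iU 0 2) * y (iU 1 2)) := by
  simp only [Upart]; ring

lemma Tpart_sum (x y : K16 → ℤ) (α β : ℤ) (ha : x iA = 2*α+1) (hb : x iB = 2*β+1) :
    ∃ w, Tpart x y + Tpart y y = 4 * w := by
  obtain ⟨γ, hγ⟩ := Int.even_mul_succ_self (y iA)
  obtain ⟨δ, hδ⟩ := Int.even_mul_succ_self (y iB)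
  exact ⟨-(α * y iA) - β * y iB - γ - δ, by
    simp only [Tpart]
    linear_combination (-2 * y iA) * ha + (-2 * y iB) * hb - 2 * hγ - 2 * hδ⟩

lemma odd_odd (a b : ℤ) (h : 8 ∣ 2*(a*a) + 2*(b*b) - 12) : ∃ α β, a = 2*α+1 ∧ b = 2*β+1 := by
  obtain ⟨m, hm⟩ := h
  rcases Int.even_or_odd a with ⟨s, hs⟩ | ⟨s, hs⟩ <;>
    rcases Int.even_or_odd b with ⟨t, ht⟩ | ⟨t, ht⟩ <;> subst hs <;> subst ht
  · exfalso
    obtain ⟨S, T, h2⟩ : ∃ S T, 8*S + 8*T - 12 = 8*m := ⟨s*s, t*t, by linear_combination hm⟩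
    omega
  · exfalso
    obtain ⟨S, T, h2⟩ : ∃ S T, 8*S + 8*T + 8*t - 10 = 8*m := ⟨s*s, t*t, by linear_combination hm⟩
    omega
  · exfalso
    obtain ⟨S, T, h2⟩ : ∃ S T, 8*S + 8*s + 8*T - 10 = 8*m := ⟨s*s, t*t, by linear_combination hm⟩
    omega
  · exact ⟨s, t, rfl, rfl⟩

set_option maxHeartbeats 4000000 in
lemma e8_even (x : K16 → ℤ) (hx : ∀ z, 2 ∣ bf gramLambda x z) : ∀ j : Fin 8, 2 ∣ x (iE j) := by
  have h0 := hx (std (iE 0)); have h1 := hx (std (iE 1)); have h2 := hx (std (iE 2))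
  have h3 := hx (std (iE 3)); have h4 := hx (std (iE 4)); have h5 := hx (std (iE 5))
  have h6 := hx (std (iE 6)); have h7 := hx (std (iE 7))
  rw [bf_expand] at h0 h1 h2 h3 h4 h5 h6 h7
  simp (config := { decide := true }) [Upart, Epart, Tpart, e8q, iU, iE, iA, iB, std]
    at h0 h1 h2 h3 h4 h5 h6 h7
  have e0 : 2 ∣ x (Sum.inr (Sum.inl 0)) := by omega
  have e1 : 2 ∣ x (Sum.inr (Sum.inl 1)) := by omega
  have e2 : 2 ∣ x (Sum.inr (Sum.inl 2)) := by omega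
  have e3 : 2 ∣ x (Sum.inr (Sum.inl 3)) := by omega
  have e4 : 2 ∣ x (Sum.inr (Sum.inl 4)) := by omega
  have e5 : 2 ∣ x (Sum.inr (Sum.inl 5)) := by omega
  have e6 : 2 ∣ x (Sum.inr (Sum.inl 6)) := by omega
  have e7 : 2 ∣ x (Sum.inr (Sum.inl 7)) := by omega
  intro j
  fin_cases j
  exacts [e0, e1, e2, e3, e4, e5, e6, e7]

set_option maxHeartbeats 4000000 in
lemma key (D : K16 → ℤ) (hq : bf gramLambda D D = -12) (hdiv : HasDiv gramLambda D 2) :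
    (∀ u : Fin 2 × Fin 3, 2 ∣ D (Sum.inl u)) ↔
      ∀ y, (∀ z, 2 ∣ bf gramLambda y z) → 4 ∣ bf gramLambda D y + bf gramLambda y y := by
  constructor
  · intro hu y hy
    -- halves
    set g : Fin 2 × Fin 3 → ℤ := fun u => D (Sum.inl u) / 2 with hgdef
    have hg : ∀ u, D (Sum.inl u) = 2 * g u := fun u => (Int.mul_ediv_cancel' (hu u)).symm
    have heD := e8_even D hdiv.2.1
    have heY := e8_even y hy
    set gE : Fin 8 → ℤ := fun j => D (iE j) / 2 with hgEdef
    have hgE : ∀ j, D (iE j) = 2 * gE j := fun j => (Int.mul_ediv_cancel' (heD j)).symm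
    set gY : Fin 8 → ℤ := fun j => y (iE j) / 2 with hgYdef
    have hgY : ∀ j, y (iE j) = 2 * gY j := fun j => (Int.mul_ediv_cancel' (heY j)).symm
    -- a, b odd
    have hqq := hq
    rw [bf_expand] at hqq
    obtain ⟨wU, hU⟩ : ∃ w, Upart D D = 8 * w := ⟨_, Upart_half2 D g hg⟩
    have hE1 : Epart D D = 4 * e8q gE gE := by
      simp only [Epart]; exact e8q_half _ _ _ _ hgE hgE
    obtain ⟨wE, hEE⟩ : ∃ w, Epart D D = 8 * w := ⟨_, mul42 hE1 (e8q_self gE)⟩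
    have hT2 : Tpart D D = -2*(D iA * D iA) - 2*(D iB * D iB) := by simp only [Tpart]; ring
    have h8 : (8:ℤ) ∣ 2*(D iA * D iA) + 2*(D iB * D iB) - 12 := ⟨wU + wE, by linarith⟩
    obtain ⟨α, β, ha, hb⟩ := odd_odd _ _ h8
    -- assemble
    rw [bf_expand D y, bf_expand y y]
    obtain ⟨w1, hw1⟩ : ∃ w, Upart D y = 4 * w := ⟨_, Upart_half_left D y g hg⟩
    obtain ⟨w2, hw2⟩ : ∃ w, Epart D y = 4 * w :=
      ⟨_, by simp only [Epart]; exact e8q_half _ _ _ _ hgE hgY⟩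
    obtain ⟨w3, hw3⟩ : ∃ w, Upart y y = 4 * w := ⟨_, Upart_self y⟩
    obtain ⟨w4, hw4⟩ : ∃ w, Epart y y = 4 * w :=
      ⟨_, by simp only [Epart]; exact e8q_half _ _ _ _ hgY hgY⟩
    obtain ⟨w5, hw5⟩ := Tpart_sum D y α β ha hb
    exact ⟨w1 + w2 + w3 + w4 + w5, by linarith⟩
  · intro hC
    have d1 : 2 ∣ D (Sum.inl (0 : Fin 2 × Fin 3)) := by
      have h := hC (std (Sum.inl ((1:Fin 2), (0:Fin 3)))) (fun z => by
        rw [bf_expand]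
        simp (config := { decide := true }) [Upart, Epart, Tpart, e8q, std, iU, iE, iA, iB])
      rw [bf_expand, bf_expand] at h
      simp (config := { decide := true }) [Upart, Epart, Tpart, e8q, std, iU, iE, iA, iB] at h
      show 2 ∣ D (Sum.inl ((0:Fin 2), (0:Fin 3)))
      omega
    have d2 : 2 ∣ D (Sum.inl ((1:Fin 2), (0:Fin 3))) := by
      have h := hC (std (Sum.inl ((0:Fin 2), (0:Fin 3)))) (fun z => by
        rw [bf_expand]
        simp (config := { decide := true }) [Upart, Epart, Tpart, e8q, std, iU, iE, iA, iB])
      rw [bf_expand, bf_expand] at h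
      simp (config := { decide := true }) [Upart, Epart, Tpart, e8q, std, iU, iE, iA, iB] at h
      omega
    have d3 : 2 ∣ D (Sum.inl ((0:Fin 2), (1:Fin 3))) := by
      have h := hC (std (Sum.inl ((1:Fin 2), (1:Fin 3)))) (fun z => by
        rw [bf_expand]
        simp (config := { decide := true }) [Upart, Epart, Tpart, e8q, std, iU, iE, iA, iB])
      rw [bf_expand, bf_expand] at h
      simp (config := { decide := true }) [Upart, Epart, Tpart, e8q, std, iU, iE, iA, iB] at h
      omega
    have d4 : 2 ∣ D (Sum.inl (1 : Fin 2 × Fin 3)) := by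
      have h := hC (std (Sum.inl ((0:Fin 2), (1:Fin 3)))) (fun z => by
        rw [bf_expand]
        simp (config := { decide := true }) [Upart, Epart, Tpart, e8q, std, iU, iE, iA, iB])
      rw [bf_expand, bf_expand] at h
      simp (config := { decide := true }) [Upart, Epart, Tpart, e8q, std, iU, iE, iA, iB] at h
      show 2 ∣ D (Sum.inl ((1:Fin 2), (1:Fin 3)))
      omega
    have d5 : 2 ∣ D (Sum.inl ((0:Fin 2), (2:Fin 3))) := by
      have h := hC (std (Sum.inl ((1:Fin 2), (2:Fin 3)))) (fun z => by
        rw [bf_expand]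
        simp (config := { decide := true }) [Upart, Epart, Tpart, e8q, std, iU, iE, iA, iB])
      rw [bf_expand, bf_expand] at h
      simp (config := { decide := true }) [Upart, Epart, Tpart, e8q, std, iU, iE, iA, iB] at h
      omega
    have d6 : 2 ∣ D (Sum.inl ((1:Fin 2), (2:Fin 3))) := by
      have h := hC (std (Sum.inl ((0:Fin 2), (2:Fin 3)))) (fun z => by
        rw [bf_expand]
        simp (config := { decide := true }) [Upart, Epart, Tpart, e8q, std, iU, iE, iA, iB])
      rw [bf_expand, bf_expand] at h
      simp (config := { decide := true }) [Upart, Epart, Tpart, e8q, std, iU, iE, iA, iB] at h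
      omega
    intro u
    fin_cases u <;> first | exact d1 | exact d2 | exact d3 | exact d4 | exact d5 | exact d6

lemma isom_symm {ι : Type*} [Fintype ι] [DecidableEq ι] (G : Matrix ι ι ℤ)
    (φ : (ι → ℤ) ≃ₗ[ℤ] (ι → ℤ)) (hφ : IsIsometry G φ) : IsIsometry G φ.symm := by
  intro x y
  have h := hφ (φ.symm x) (φ.symm y)
  simp only [LinearEquiv.apply_symm_apply] at h
  exact h.symm

lemma bf_symm_arg (φ : (K16 → ℤ) ≃ₗ[ℤ] (K16 → ℤ)) (hφ : IsIsometry gramLambda φ)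
    (x y : K16 → ℤ) : bf gramLambda (φ x) y = bf gramLambda x (φ.symm y) := by
  conv_lhs => rw [← LinearEquiv.apply_symm_apply φ y]
  exact hφ _ _

lemma cond_transport (D : K16 → ℤ) (φ : (K16 → ℤ) ≃ₗ[ℤ] (K16 → ℤ))
    (hφ : IsIsometry gramLambda φ)
    (h : ∀ y, (∀ z, 2 ∣ bf gramLambda y z) → 4 ∣ bf gramLambda D y + bf gramLambda y y) :
    ∀ y, (∀ z, 2 ∣ bf gramLambda y z) → 4 ∣ bf gramLambda (φ D) y + bf gramLambda y y := by
  intro y hy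
  have hy' : ∀ z, 2 ∣ bf gramLambda (φ.symm y) z := by
    intro z
    have e := bf_symm_arg φ.symm (isom_symm _ φ hφ) y z
    rw [LinearEquiv.symm_symm] at e
    rw [e]
    exact hy (φ z)
  have h2 := h _ hy'
  have e2 : bf gramLambda (φ D) y = bf gramLambda D (φ.symm y) := bf_symm_arg φ hφ D y
  have e3 : bf gramLambda (φ.symm y) (φ.symm y) = bf gramLambda y y :=
    isom_symm _ φ hφ y y
  rw [e2, ← e3]
  exact h2

/-- If `D ∈ Λ = U(2)³ ⊕ E₈(-1) ⊕ (-2)²` has `q(D) = -12` and `div(D) = 2` and `φ ∈ O(Λ)`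
is any isometry, then the `U(2)³`-projection of `D` is divisible by `2` iff the
`U(2)³`-projection of `φ(D)` is divisible by `2`. -/
theorem divisible_U23_part_invariant (D : K16 → ℤ)
    (hq : bf gramLambda D D = -12) (hdiv : HasDiv gramLambda D 2)
    (φ : (K16 → ℤ) ≃ₗ[ℤ] (K16 → ℤ)) (hφ : IsIsometry gramLambda φ) :
    (∀ u : Fin 2 × Fin 3, 2 ∣ D (Sum.inl u)) ↔
      (∀ u : Fin 2 × Fin 3, 2 ∣ φ D (Sum.inl u)) := by
  have hq2 : bf gramLambda (φ D) (φ D) = -12 := by rw [hφ]; exact hq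
  have hdiv2 : HasDiv gramLambda (φ D) 2 := by
    refine ⟨hdiv.1, fun y => ?_, fun s hs => hdiv.2.2 s fun y => ?_⟩
    · rw [bf_symm_arg φ hφ D y]
      exact hdiv.2.1 _
    · have := hs (φ y)
      rwa [hφ] at this
  rw [key D hq hdiv, key (φ D) hq2 hdiv2]
  constructor
  · intro h
    exact cond_transport D φ hφ h
  · intro h
    have h2 := cond_transport (φ D) φ.symm (isom_symm _ φ hφ) h
    rwa [LinearEquiv.symm_apply_apply] at h2
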